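/- Suppose α^1 = 1 and each component function is a strongly convex quadratic, f_j(x) = (1/2)xᵀA_j x + b_jᵀx + d_j with A_j symmetric positive definite. Then one cycle of the IN method reaches the global optimum: the iterate x_{m+1}^1 obtained at the end of the first cycle equals the unique minimizer of f(x) = Σ_{j=1}^m f_j(x) over ℝ^n. -/

import Mathlib

open Finset Filter Classical

lemma posdef_inner {n : ℕ} {M : Matrix (Fin n) (Fin n) ℝ} (hM : M.PosDef)
    (v : EuclideanSpace ℝ (Fin n)) (hv : v ≠ 0) :
    0 < (inner ℝ v ((Matrix.toEuclideanCLM (𝕜 := ℝ) M) v) : ℝ) := by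
  rw [EuclideanSpace.inner_eq_star_dotProduct]
  have := hM.dotProduct_mulVec_pos (x := WithLp.equiv 2 _ v) (by simpa using hv)
  simpa [Matrix.ofLp_toEuclideanCLM, Matrix.toLin'_apply, dotProduct_comm] using this

lemma symm_inner {n : ℕ} {M : Matrix (Fin n) (Fin n) ℝ} (hM : M.IsHermitian)
    (u v : EuclideanSpace ℝ (Fin n)) :
    (inner ℝ ((Matrix.toEuclideanCLM (𝕜 := ℝ) M) u) v : ℝ)
      = inner ℝ u ((Matrix.toEuclideanCLM (𝕜 := ℝ) M) v) := by
  have h : star (Matrix.toEuclideanCLM (𝕜 := ℝ) M) = Matrix.toEuclideanCLM (𝕜 := ℝ) M := by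
    rw [← map_star]; exact congrArg _ hM
  rw [ContinuousLinearMap.star_eq_adjoint] at h
  conv_lhs => rw [← h]
  rw [ContinuousLinearMap.adjoint_inner_left]

noncomputable def quadObj (n m : ℕ) (A : ℕ → Matrix (Fin n) (Fin n) ℝ)
    (b : ℕ → EuclideanSpace ℝ (Fin n)) (d : ℕ → ℝ) (y : EuclideanSpace ℝ (Fin n)) : ℝ :=
  ∑ j ∈ Finset.Icc 1 m,
    ((1/2) * (inner ℝ y ((Matrix.toEuclideanCLM (𝕜 := ℝ) (A j)) y) : ℝ) + (inner ℝ (b j) y : ℝ) + d j)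

theorem statement12 (n m : ℕ) (hm : 1 < m)
    (A : ℕ → Matrix (Fin n) (Fin n) ℝ) (b : ℕ → EuclideanSpace ℝ (Fin n)) (d : ℕ → ℝ)
    (hA : ∀ j ∈ Finset.Icc 1 m, (A j).PosDef ∧ (A j).IsSymm)
    (x : ℕ → EuclideanSpace ℝ (Fin n))
    (H : ℕ → Matrix (Fin n) (Fin n) ℝ)
    (hH0 : H 0 = 0)
    (hH : ∀ i ∈ Finset.Icc 1 m, H i = H (i-1) + A i)
    (hiter : ∀ i ∈ Finset.Icc 1 m,
      x (i+1) = x i - (Matrix.toEuclideanCLM (𝕜 := ℝ) (H i)⁻¹)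
        ((Matrix.toEuclideanCLM (𝕜 := ℝ) (A i)) (x i) + b i)) :
    (∀ y, quadObj n m A b d (x (m+1)) ≤ quadObj n m A b d y) ∧
      (∀ z, (∀ y, quadObj n m A b d z ≤ quadObj n m A b d y) → z = x (m+1)) := by
  -- positive definiteness of partial sums
  have hSpos : ∀ k, 1 ≤ k → k ≤ m → (∑ j ∈ Icc 1 k, A j).PosDef := by
    intro k hk1 hkm
    induction k with
    | zero => omega
    | succ i ih =>
      by_cases hi : i = 0
      · subst hi
        simpa using (hA 1 (Finset.mem_Icc.mpr ⟨le_refl 1, by omega⟩)).1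
      · rw [Finset.sum_Icc_succ_top (by omega : 1 ≤ i + 1)]
        exact (ih (by omega) (by omega)).add (hA (i+1) (Finset.mem_Icc.mpr ⟨by omega, hkm⟩)).1
  -- key invariant
  have key : ∀ i, i ≤ m → H i = ∑ j ∈ Icc 1 i, A j ∧
      (Matrix.toEuclideanCLM (𝕜 := ℝ) (H i)) (x (i+1)) = -∑ j ∈ Icc 1 i, b j := by
    intro i
    induction i with
    | zero => intro _; simp [hH0]
    | succ i ih =>
      intro him
      obtain ⟨hs, he⟩ := ih (by omega)
      have hmem : i + 1 ∈ Icc 1 m := Finset.mem_Icc.mpr ⟨by omega, him⟩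
      have hHA : H (i+1) = H i + A (i+1) := by simpa using hH (i+1) hmem
      have hsum : H (i+1) = ∑ j ∈ Icc 1 (i+1), A j := by
        rw [hHA, hs, Finset.sum_Icc_succ_top (by omega : 1 ≤ i+1)]
      have hpos : (H (i+1)).PosDef := hsum ▸ hSpos (i+1) (by omega) him
      have hdet : IsUnit (H (i+1)).det := isUnit_iff_ne_zero.mpr hpos.det_pos.ne'
      refine ⟨hsum, ?_⟩
      rw [hiter (i+1) hmem, map_sub]
      have hid : (Matrix.toEuclideanCLM (𝕜 := ℝ) (H (i+1)))
          ((Matrix.toEuclideanCLM (𝕜 := ℝ) (H (i+1))⁻¹)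
            ((Matrix.toEuclideanCLM (𝕜 := ℝ) (A (i+1))) (x (i+1)) + b (i+1)))
          = (Matrix.toEuclideanCLM (𝕜 := ℝ) (A (i+1))) (x (i+1)) + b (i+1) := by
        rw [← ContinuousLinearMap.mul_apply, ← map_mul, Matrix.mul_nonsing_inv _ hdet,
          map_one, ContinuousLinearMap.one_apply]
      rw [hid, hHA, map_add, ContinuousLinearMap.add_apply, he,
        Finset.sum_Icc_succ_top (by omega : 1 ≤ i+1)]
      abel
  obtain ⟨hsm, hem⟩ := key m (le_refl m)
  have hSpd : (∑ j ∈ Icc 1 m, A j).PosDef := hSpos m (by omega) (le_refl m)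
  have hSherm : (∑ j ∈ Icc 1 m, A j).IsHermitian := hSpd.1
  have hopt : (Matrix.toEuclideanCLM (𝕜 := ℝ) (∑ j ∈ Icc 1 m, A j)) (x (m+1))
      = -∑ j ∈ Icc 1 m, b j := by rw [← hsm]; exact hem
  -- expansion of quadObj
  have hexp : ∀ y, quadObj n m A b d y
      = (1/2) * (inner ℝ y ((Matrix.toEuclideanCLM (𝕜 := ℝ) (∑ j ∈ Icc 1 m, A j)) y) : ℝ)
        + (inner ℝ (∑ j ∈ Icc 1 m, b j) y : ℝ) + ∑ j ∈ Icc 1 m, d j := by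
    intro y
    unfold quadObj
    rw [Finset.sum_add_distrib, Finset.sum_add_distrib, ← Finset.mul_sum]
    congr 2
    · congr 1
      have hT : (Matrix.toEuclideanCLM (𝕜 := ℝ) (∑ j ∈ Icc 1 m, A j)) y
          = ∑ j ∈ Icc 1 m, (Matrix.toEuclideanCLM (𝕜 := ℝ) (A j)) y := by
        rw [map_sum]; exact ContinuousLinearMap.sum_apply _ _ _
      rw [hT, inner_sum]
    · rw [← sum_inner]
  -- quadratic difference identity
  have hdiff : ∀ y : EuclideanSpace ℝ (Fin n),
      quadObj n m A b d y = quadObj n m A b d (x (m+1))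
        + (1/2) * (inner ℝ (y - x (m+1))
            ((Matrix.toEuclideanCLM (𝕜 := ℝ) (∑ j ∈ Icc 1 m, A j)) (y - x (m+1))) : ℝ) := by
    intro y
    rw [hexp y, hexp (x (m+1))]
    have hy : y = x (m+1) + (y - x (m+1)) := by abel
    rw [hy]
    have hy' : x (m+1) + (y - x (m+1)) - x (m+1) = y - x (m+1) := by abel
    rw [hy']
    simp only [map_add, ContinuousLinearMap.add_apply, inner_add_left, inner_add_right]
    have h1 : (inner ℝ (x (m+1)) ((Matrix.toEuclideanCLM (𝕜 := ℝ) (∑ j ∈ Icc 1 m, A j))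
        (y - x (m+1))) : ℝ)
        = inner ℝ (y - x (m+1)) ((Matrix.toEuclideanCLM (𝕜 := ℝ) (∑ j ∈ Icc 1 m, A j)) (x (m+1))) := by
      rw [← symm_inner hSherm, real_inner_comm]
    have h2 : (inner ℝ (y - x (m+1))
        ((Matrix.toEuclideanCLM (𝕜 := ℝ) (∑ j ∈ Icc 1 m, A j)) (x (m+1))) : ℝ)
        = -(inner ℝ (∑ j ∈ Icc 1 m, b j) (y - x (m+1)) : ℝ) := by
      rw [hopt, inner_neg_right, real_inner_comm]
    rw [h1, h2]
    ring
  have hnonneg : ∀ v : EuclideanSpace ℝ (Fin n),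
      0 ≤ (inner ℝ v ((Matrix.toEuclideanCLM (𝕜 := ℝ) (∑ j ∈ Icc 1 m, A j)) v) : ℝ) := by
    intro v
    by_cases hv : v = 0
    · simp [hv]
    · exact (posdef_inner hSpd v hv).le
  constructor
  · intro y
    rw [hdiff y]
    have := hnonneg (y - x (m+1))
    linarith
  · intro z hz
    have hle := hz (x (m+1))
    rw [hdiff z] at hle
    by_contra hne
    have hv : z - x (m+1) ≠ 0 := sub_ne_zero.mpr hne
    have := posdef_inner hSpd _ hv
    linarith
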